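/- Let G be a finite group acting on a commutative ring R and let I ⊆ R be a finitely generated G-stable ideal. Then there exists M ≥ 1 such that I^M is contained in the ideal of R generated by I^G = I ∩ R^G. -/
import Mathlib

open Polynomial

lemma eval_mem_of_coeff_mem {R : Type*} [CommRing R] {J : Ideal R} {q : R[X]}
    (h : ∀ i, q.coeff i ∈ J) (x : R) : q.eval x ∈ J := by
  rw [Polynomial.eval_eq_sum, Polynomial.sum]
  exact Ideal.sum_mem _ fun i _ => J.mul_mem_right _ (h i)

theorem exists_pow_le_span_fixed
    {G R : Type*} [Group G] [Fintype G] [CommRing R] [MulSemiringAction G R]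
    (I : Ideal R) (hfg : I.FG) (hGI : ∀ (σ : G), ∀ x ∈ I, σ • x ∈ I) :
    ∃ M : ℕ, 1 ≤ M ∧
      I ^ M ≤ Ideal.span {r : R | r ∈ I ∧ ∀ σ : G, σ • r = r} := by
  classical
  set J := Ideal.span {r : R | r ∈ I ∧ ∀ σ : G, σ • r = r} with hJ
  have key : I ≤ J.radical := by
    intro x hx
    rcases subsingleton_or_nontrivial R with hs | hs
    · exact ⟨1, by rw [Subsingleton.elim (x ^ 1) 0]; exact J.zero_mem⟩
    set p := prodXSubSMul G R x with hp
    set n := p.natDegree with hn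
    have hmono : p.Monic := prodXSubSMul.monic G R x
    have hmap : p.map (Ideal.Quotient.mk I) =
        X ^ Fintype.card (G ⧸ MulAction.stabilizer G x) := by
      rw [hp]
      unfold prodXSubSMul
      rw [Polynomial.map_prod]
      rw [Finset.prod_congr rfl (fun g _ => ?_), Finset.prod_const, Finset.card_univ]
      have hmem : MulAction.ofQuotientStabilizer G x g ∈ I := by
        induction g using QuotientGroup.induction_on with
        | H g => rw [MulAction.ofQuotientStabilizer_mk]; exact hGI g x hx
      rw [Polynomial.map_sub, Polynomial.map_X, Polynomial.map_C,
        Ideal.Quotient.eq_zero_iff_mem.mpr hmem, map_zero, sub_zero]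
    have hncard : n = Fintype.card (G ⧸ MulAction.stabilizer G x) := by
      rw [hn, hp]
      unfold prodXSubSMul
      rw [Polynomial.natDegree_prod_of_monic _ _ fun g _ => monic_X_sub_C _]
      simp [natDegree_X_sub_C, natDegree_X]
    -- q = p - X^n has all coefficients in J
    have hcoeff : ∀ i, (p - X ^ n).coeff i ∈ J := by
      intro i
      have hfix : ∀ σ : G, σ • (p - X ^ n).coeff i = (p - X ^ n).coeff i := by
        intro σ
        rw [coeff_sub, smul_sub, prodXSubSMul.coeff, coeff_X_pow]
        congr 1
        split <;> simp
      have hmemI : (p - X ^ n).coeff i ∈ I := by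
        rcases eq_or_ne i n with rfl | hne
        · rw [coeff_sub, coeff_X_pow, if_pos rfl, hmono.coeff_natDegree]
          simp
        · rw [coeff_sub, coeff_X_pow, if_neg hne, sub_zero,
            ← Ideal.Quotient.eq_zero_iff_mem, ← coeff_map, hmap, ← hncard, coeff_X_pow,
            if_neg hne]
      exact Ideal.subset_span ⟨hmemI, hfix⟩
    have : x ^ n ∈ J := by
      have := eval_mem_of_coeff_mem hcoeff x
      rw [eval_sub, prodXSubSMul.eval, zero_sub, eval_pow, eval_X] at this
      simpa using J.neg_mem this
    exact ⟨n, this⟩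
  obtain ⟨k, hk⟩ := Ideal.exists_pow_le_of_le_radical_of_fg key hfg
  exact ⟨max k 1, le_max_right _ _, (Ideal.pow_le_pow_right (le_max_left _ _)).trans hk⟩
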